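/- Let n ≥ 2, k ≥ 0, and let n_1, …, n_k be even integers with 1 ≤ n_i ≤ 2n−2. Set n_0 = 1 − Σ n_i. Then the group presented by ⟨x, y | x^n y^{-2}, x^{n_1}(yxy^{-1})^{-n_k} x^{n_2}(yxy^{-1})^{-n_{k-1}} ⋯ x^{n_k}(yxy^{-1})^{-n_1} x^{n_0} (yxy^{-1})^{2-n_0}⟩ is isomorphic to Q_{4n}. -/

import Mathlib

private lemma listProdZpow {G : Type*} [Group G] (X : G) :
    ∀ l : List ℤ, (l.map fun m => X ^ m).prod = X ^ l.sum
  | [] => by simp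
  | m :: l => by simp [listProdZpow X l, zpow_add]

private lemma ofFnRev {α : Type*} {k : ℕ} (f : Fin k → α) :
    (List.ofFn f).reverse = List.ofFn fun i => f i.rev := by
  apply List.ext_getElem
  · simp
  · intro i h1 h2
    simp only [List.getElem_reverse, List.getElem_ofFn]
    congr 1
    ext
    simp only [Fin.rev, List.length_ofFn] at *
    omega

private lemma aZpow (n : ℕ) [NeZero (2 * n)] (m : ℤ) :
    (QuaternionGroup.a 1 : QuaternionGroup n) ^ m = QuaternionGroup.a (m : ZMod (2 * n)) := by
  rcases m with k | k
  · rw [Int.ofNat_eq_coe, zpow_natCast, QuaternionGroup.a_one_pow]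
    push_cast; rfl
  · rw [zpow_negSucc, QuaternionGroup.a_one_pow]
    have hinv : ∀ i : ZMod (2*n), (QuaternionGroup.a i : QuaternionGroup n)⁻¹ = QuaternionGroup.a (-i) := fun i => rfl
    rw [hinv]
    congr 1
    push_cast
    ring

private theorem key_rels {G : Type*} [Group G] (n : ℕ) {k : ℕ} (ns : Fin k → ℤ)
    (heven : ∀ i, Even (ns i)) (n0 : ℤ) (hn0 : n0 = 1 - ∑ i, ns i)
    (X Y B : G) (hB : B = Y * X * Y⁻¹)
    (h1 : X ^ (n : ℤ) * Y ^ (-2 : ℤ) = 1)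
    (h2 : (List.ofFn fun j : Fin k => X ^ ns j * B ^ (-(ns j.rev))).prod
        * X ^ n0 * B ^ (2 - n0) = 1) :
    Y * X * Y⁻¹ = X⁻¹ ∧ Y * Y = X ^ n ∧ X ^ (2 * n) = 1 := by
  have hYY : Y * Y = X ^ (n : ℤ) := by
    have h : X ^ (n : ℤ) = (Y ^ (-2 : ℤ))⁻¹ := eq_inv_of_mul_eq_one_left h1
    rw [h, ← zpow_neg]
    norm_num
    rw [pow_two]
  have hYBY : Y * B * Y⁻¹ = X := by
    have step : Y * B * Y⁻¹ = (Y * Y) * X * (Y * Y)⁻¹ := by rw [hB]; group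
    rw [step, hYY, ← (Commute.refl X).zpow_right (n:ℤ) |>.eq, mul_inv_cancel_right]
  set φy := MulAut.conj Y with hφy
  have hφX : φy X = B := by rw [hφy, MulAut.conj_apply, hB]
  have hφB : φy B = X := by rw [hφy, MulAut.conj_apply]; exact hYBY
  have h2' : (List.ofFn fun j : Fin k => B ^ ns j * X ^ (-(ns j.rev))).prod
      * B ^ n0 * X ^ (2 - n0) = 1 := by
    have hc := congrArg φy h2
    simp only [map_mul, map_zpow, map_list_prod, List.map_ofFn, Function.comp_def,
      hφX, hφB, map_one] at hc
    exact hc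
  have hQinv : ((List.ofFn fun j : Fin k => X ^ ns j * B ^ (-(ns j.rev))).prod)⁻¹
      = X ^ n0 * B ^ (2 - n0) := by
    rw [mul_assoc] at h2
    exact inv_eq_of_mul_eq_one_right h2
  have hPQ : (List.ofFn fun j : Fin k => B ^ ns j * X ^ (-(ns j.rev))).prod
      = ((List.ofFn fun j : Fin k => X ^ ns j * B ^ (-(ns j.rev))).prod)⁻¹ := by
    rw [List.prod_inv_reverse, List.map_ofFn, ofFnRev]
    refine congrArg List.prod (List.ofFn_inj.mpr ?_)
    funext i
    simp [mul_inv_rev, Fin.rev_rev, ← zpow_neg, Function.comp]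
  have hB2 : B ^ (2 : ℤ) = X ^ (-2 : ℤ) := by
    rw [hPQ, hQinv] at h2'
    have key : X ^ n0 * B ^ (2 - n0) * B ^ n0 * X ^ (2 - n0) = X ^ n0 * B ^ (2:ℤ) * X ^ (2 - n0) := by
      rw [mul_assoc (X ^ n0), ← zpow_add]; ring_nf
    rw [key] at h2'
    have e : B ^ (2:ℤ) = X ^ (-n0) * (X ^ n0 * B ^ (2:ℤ) * X ^ (2 - n0)) * X ^ (n0 - 2) := by
      group
    rw [e, h2', mul_one, ← zpow_add]
    ring_nf
  have heB : ∀ m : ℤ, Even m → B ^ m = X ^ (-m) := by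
    rintro m ⟨c, rfl⟩
    calc B ^ (c + c) = (B ^ (2:ℤ)) ^ c := by rw [← zpow_mul]; ring_nf
    _ = (X ^ (-2:ℤ)) ^ c := by rw [hB2]
    _ = X ^ (-(c + c)) := by rw [← zpow_mul]; ring_nf
  have hsum_rev : ∑ j : Fin k, ns j.rev = ∑ j : Fin k, ns j := by
    exact Fintype.sum_equiv Fin.revPerm (fun j => ns j.rev) ns (fun i => rfl)
  have hQX : (List.ofFn fun j : Fin k => X ^ ns j * B ^ (-(ns j.rev))).prod
      = X ^ (2 - 2 * n0) := by
    have hterm : (fun j : Fin k => X ^ ns j * B ^ (-(ns j.rev)))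
        = fun j => X ^ (ns j + ns j.rev) := by
      funext j
      rw [heB _ ((heven j.rev).neg), neg_neg, zpow_add]
    rw [hterm]
    have hmap : (List.ofFn fun j : Fin k => X ^ (ns j + ns j.rev))
        = (List.ofFn fun j : Fin k => ns j + ns j.rev).map (fun m => X ^ m) := by
      rw [List.map_ofFn]; rfl
    rw [hmap, listProdZpow, List.sum_ofFn]
    congr 1
    rw [Finset.sum_add_distrib, hsum_rev]
    omega
  have hodd : Even (1 - n0) := by
    have h' : 1 - n0 = ∑ i, ns i := by omega
    rw [h']
    exact Finset.even_sum _ (fun i _ => heven i)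
  have hBX : B = X ^ (-1 : ℤ) := by
    rw [hQX] at h2
    have hsplit : B ^ (2 - n0) = B * X ^ (n0 - 1) := by
      have ha : B ^ (1 - n0) = X ^ (n0 - 1) := by
        rw [heB _ hodd]; congr 1; ring
      calc B ^ (2 - n0) = B ^ (1:ℤ) * B ^ (1 - n0) := by rw [← zpow_add]; ring_nf
      _ = B * X ^ (n0 - 1) := by rw [zpow_one, ha]
    rw [hsplit] at h2
    have e : B = X ^ (n0 - 2) * (X ^ (2 - 2*n0) * X ^ n0 * (B * X ^ (n0 - 1))) * X ^ (1 - n0) := by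
      group
    rw [e, h2, mul_one, ← zpow_add]
    congr 1; ring
  refine ⟨by rw [← hB, hBX, zpow_neg_one], by rw [hYY, zpow_natCast], ?_⟩
  have hX2 : X ^ (n:ℤ) = X ^ (-(n:ℤ)) := by
    have c1 : Y * X ^ (n:ℤ) * Y⁻¹ = X ^ (n:ℤ) := by rw [← hYY]; group
    have c2 : Y * X ^ (n:ℤ) * Y⁻¹ = X ^ (-(n:ℤ)) := by
      calc Y * X ^ (n:ℤ) * Y⁻¹ = φy (X ^ (n:ℤ)) := (MulAut.conj_apply Y _).symm
      _ = (φy X) ^ (n:ℤ) := map_zpow _ _ _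
      _ = X ^ (-(n:ℤ)) := by rw [hφX, hBX, ← zpow_mul]; congr 1; ring
    rw [← c1, c2]
  have hfin : X ^ ((2*n : ℕ):ℤ) = 1 := by
    push_cast
    rw [two_mul, zpow_add]
    nth_rewrite 2 [hX2]
    rw [← zpow_add]
    simp
  rw [← zpow_natCast X (2*n)]
  exact hfin

private theorem psi_exists {G : Type*} [Group G] (n : ℕ) (hn : 2 ≤ n) (X Y : G)
    (hconj : Y * X * Y⁻¹ = X⁻¹) (hYY : Y * Y = X ^ n) (hX1 : X ^ (2 * n) = 1) :
    ∃ ψ : QuaternionGroup n →* G, (∀ i : ZMod (2 * n), ψ (.a i) = X ^ i.val) ∧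
      (∀ i : ZMod (2 * n), ψ (.xa i) = Y * X ^ i.val) := by
  haveI : NeZero (2 * n) := ⟨by omega⟩
  have hmod : ∀ m : ℕ, X ^ m = X ^ (m % (2 * n)) := by
    intro m
    conv_lhs => rw [← Nat.div_add_mod m (2 * n)]
    rw [pow_add, pow_mul, hX1, one_pow, one_mul]
  have hadd : ∀ i j : ZMod (2 * n), X ^ (i + j).val = X ^ i.val * X ^ j.val := by
    intro i j
    rw [ZMod.val_add, ← hmod, pow_add]
  have hXY : ∀ m : ℕ, X ^ m * Y = Y * (X ^ m)⁻¹ := by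
    have h0 : Y * X = X⁻¹ * Y := by
      rw [← hconj]; group
    have hxy : X * Y = Y * X⁻¹ := by
      calc X * Y = X * (Y * X) * X⁻¹ := by group
      _ = X * (X⁻¹ * Y) * X⁻¹ := by rw [h0]
      _ = Y * X⁻¹ := by group
    intro m
    induction m with
    | zero => simp
    | succ m ih =>
      calc X ^ (m+1) * Y = X ^ m * (X * Y) := by rw [pow_succ, mul_assoc]
      _ = X ^ m * Y * X⁻¹ := by rw [hxy, mul_assoc]
      _ = Y * (X ^ m)⁻¹ * X⁻¹ := by rw [ih]
      _ = Y * (X ^ (m+1))⁻¹ := by rw [pow_succ', mul_inv_rev, mul_assoc]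
  have hcomm : ∀ a b : ℕ, X ^ a * X ^ b = X ^ b * X ^ a := fun a b => by
    rw [← pow_add, ← pow_add, Nat.add_comm]
  have hnval : X ^ ((n : ZMod (2 * n))).val = X ^ n := by
    rw [ZMod.val_natCast_of_lt (by omega)]
  let fn : QuaternionGroup n → G := fun q =>
    match q with
    | QuaternionGroup.a i => X ^ i.val
    | QuaternionGroup.xa i => Y * X ^ i.val
  refine ⟨{ toFun := fn, map_one' := ?_, map_mul' := ?_ }, fun i => rfl, fun i => rfl⟩
  · show X ^ (0 : ZMod (2*n)).val = 1
    rw [ZMod.val_zero, pow_zero]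
  · rintro (i | i) (j | j)
    · show X ^ (i + j).val = X ^ i.val * X ^ j.val
      exact hadd i j
    · show Y * X ^ (j - i).val = X ^ i.val * (Y * X ^ j.val)
      have h : X ^ i.val * X ^ (j - i).val = X ^ j.val := by
        rw [← hadd, add_sub_cancel]
      calc Y * X ^ (j - i).val = Y * ((X ^ i.val)⁻¹ * (X ^ i.val * X ^ (j - i).val)) := by group
      _ = Y * (X ^ i.val)⁻¹ * X ^ j.val := by rw [h, mul_assoc]
      _ = X ^ i.val * Y * X ^ j.val := by rw [← hXY]
      _ = X ^ i.val * (Y * X ^ j.val) := by rw [mul_assoc]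
    · show Y * X ^ (i + j).val = Y * X ^ i.val * X ^ j.val
      rw [hadd, mul_assoc]
    · show X ^ ((n : ZMod (2*n)) + j - i).val = Y * X ^ i.val * (Y * X ^ j.val)
      have hrhs : Y * X ^ i.val * (Y * X ^ j.val)
          = X ^ n * (X ^ i.val)⁻¹ * X ^ j.val := by
        calc Y * X ^ i.val * (Y * X ^ j.val) = Y * (X ^ i.val * Y) * X ^ j.val := by group
        _ = Y * (Y * (X ^ i.val)⁻¹) * X ^ j.val := by rw [hXY]
        _ = (Y * Y) * (X ^ i.val)⁻¹ * X ^ j.val := by group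
        _ = X ^ n * (X ^ i.val)⁻¹ * X ^ j.val := by rw [hYY]
      have hidx : i + ((n : ZMod (2*n)) + j - i) = (n : ZMod (2*n)) + j := by ring
      have hcinv : (X ^ i.val)⁻¹ * X ^ n = X ^ n * (X ^ i.val)⁻¹ :=
        (((Commute.refl X).pow_pow i.val n).inv_left).eq
      rw [hrhs]
      calc X ^ ((n : ZMod (2*n)) + j - i).val
          = (X ^ i.val)⁻¹ * (X ^ i.val * X ^ ((n : ZMod (2*n)) + j - i).val) := by group
      _ = (X ^ i.val)⁻¹ * (X ^ n * X ^ j.val) := by rw [← hadd, hidx, hadd, hnval]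
      _ = X ^ n * (X ^ i.val)⁻¹ * X ^ j.val := by rw [← mul_assoc, hcinv]

private lemma sumRev {k : ℕ} (ns : Fin k → ℤ) : ∑ j : Fin k, ns j.rev = ∑ j : Fin k, ns j :=
  Fintype.sum_equiv Fin.revPerm (fun j => ns j.rev) ns (fun i => rfl)

/-- For `n ≥ 2`, `k ≥ 0` and even integers `n_1, …, n_k` with `1 ≤ n_i ≤ 2n − 2`, setting
`n_0 = 1 − Σ n_i`, the group presented by
`⟨x, y ∣ x^n y^{-2}, x^{n_1}(yxy^{-1})^{-n_k} ⋯ x^{n_k}(yxy^{-1})^{-n_1} x^{n_0}(yxy^{-1})^{2-n_0}⟩`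
is isomorphic to the quaternion group `Q_{4n}` of order `4n`. -/
theorem stmt_8 (n : ℕ) (hn : 2 ≤ n) (k : ℕ) (ns : Fin k → ℤ)
    (heven : ∀ i, Even (ns i)) (hlb : ∀ i, 1 ≤ ns i) (hub : ∀ i, ns i ≤ 2 * (n : ℤ) - 2)
    (x y b : FreeGroup (Fin 2)) (hx : x = FreeGroup.of 0) (hy : y = FreeGroup.of 1)
    (hb : b = y * x * y⁻¹)
    (n0 : ℤ) (hn0 : n0 = 1 - ∑ i, ns i)
    (rels : Set (FreeGroup (Fin 2)))
    (hrels : rels = {x ^ (n : ℤ) * y ^ (-2 : ℤ),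
      (List.ofFn fun j : Fin k => x ^ ns j * b ^ (-(ns j.rev))).prod
        * x ^ n0 * b ^ (2 - n0)}) :
    Nonempty (PresentedGroup rels ≃* QuaternionGroup n) := by
  haveI : NeZero (2 * n) := ⟨by omega⟩
  haveI : Fact (1 < 2 * n) := ⟨by omega⟩
  subst hx hy hb
  set A : QuaternionGroup n := QuaternionGroup.a 1 with hA
  set T : QuaternionGroup n := QuaternionGroup.xa 0 with hT
  set fgen : Fin 2 → QuaternionGroup n := ![A, T] with hfgen
  set π := PresentedGroup.mk rels with hπ
  have hone : ∀ r ∈ rels, π r = 1 := fun r hr =>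
    (QuotientGroup.eq_one_iff r).mpr (Subgroup.subset_normalClosure hr)
  have h1 : π (FreeGroup.of 0) ^ (n : ℤ) * π (FreeGroup.of 1) ^ (-2 : ℤ) = 1 := by
    have := hone _ (by rw [hrels]; exact Set.mem_insert _ _)
    simpa [map_mul, map_zpow] using this
  have h2 : (List.ofFn fun j : Fin k => π (FreeGroup.of 0) ^ ns j
        * (π (FreeGroup.of 1) * π (FreeGroup.of 0) * (π (FreeGroup.of 1))⁻¹) ^ (-(ns j.rev))).prod
      * π (FreeGroup.of 0) ^ n0
      * (π (FreeGroup.of 1) * π (FreeGroup.of 0) * (π (FreeGroup.of 1))⁻¹) ^ (2 - n0) = 1 := by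
    have := hone _ (by rw [hrels]; exact Set.mem_insert_iff.mpr (Or.inr rfl))
    simpa [map_mul, map_zpow, map_inv, map_list_prod, List.map_ofFn, Function.comp_def]
      using this
  obtain ⟨hconj, hYY, hX1⟩ := key_rels n ns heven n0 hn0 (π (FreeGroup.of 0))
    (π (FreeGroup.of 1))
    (π (FreeGroup.of 1) * π (FreeGroup.of 0) * (π (FreeGroup.of 1))⁻¹) rfl h1 h2
  obtain ⟨ψ, hψa, hψxa⟩ := psi_exists n hn (π (FreeGroup.of 0)) (π (FreeGroup.of 1))
    hconj hYY hX1
  have hliftA : FreeGroup.lift fgen (FreeGroup.of 0) = A := by simp [hfgen]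
  have hliftT : FreeGroup.lift fgen (FreeGroup.of 1) = T := by simp [hfgen]
  have hC : T * A * T⁻¹ = A ^ (-1 : ℤ) := by
    have hTinv : T⁻¹ = QuaternionGroup.xa ((n : ZMod (2*n)) + 0) := rfl
    rw [hA, hT, hTinv, QuaternionGroup.xa_mul_a, QuaternionGroup.xa_mul_xa, aZpow]
    congr 1
    have hzero : (n : ZMod (2*n)) + (n : ZMod (2*n)) = 0 := by
      rw [show ((n : ZMod (2*n)) + n) = ((2*n : ℕ) : ZMod (2*n)) by push_cast; ring,
        ZMod.natCast_self]
    rw [add_zero, show ((n : ZMod (2*n)) + n - (0 + 1)) = ((n : ZMod (2*n)) + n) - 1 by ring,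
      hzero]
    push_cast
    ring
  have hCz : ∀ m : ℤ, (T * A * T⁻¹) ^ m = A ^ (-m) := fun m => by
    rw [hC, ← zpow_mul]
    congr 1
    ring
  have hlift : ∀ r ∈ rels, FreeGroup.lift fgen r = 1 := by
    intro r hr
    rw [hrels] at hr
    simp only [Set.mem_insert_iff, Set.mem_singleton_iff] at hr
    rcases hr with rfl | rfl
    · rw [map_mul, map_zpow, map_zpow, hliftA, hliftT, aZpow]
      have hT2 : T ^ (-2 : ℤ) = QuaternionGroup.a (-(n : ZMod (2*n))) := by
        rw [zpow_neg, show (2:ℤ) = ((2:ℕ):ℤ) from rfl, zpow_natCast, hT,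
          QuaternionGroup.xa_sq]
        rfl
      rw [hT2, QuaternionGroup.a_mul_a, QuaternionGroup.one_def]
      congr 1
      push_cast
      ring
    · rw [map_mul, map_mul, map_zpow, map_zpow, map_list_prod, List.map_ofFn]
      simp only [Function.comp_def, map_mul, map_zpow, map_inv, hliftA, hliftT]
      simp only [hCz]
      have hterm : (fun j : Fin k => A ^ ns j * A ^ (- -(ns j.rev)))
          = fun j : Fin k => A ^ (ns j + ns j.rev) := by
        funext j
        rw [neg_neg, zpow_add]
      rw [hterm]
      have hmap : (List.ofFn fun j : Fin k => A ^ (ns j + ns j.rev))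
          = (List.ofFn fun j : Fin k => ns j + ns j.rev).map (fun m => A ^ m) := by
        rw [List.map_ofFn]; rfl
      rw [hmap, listProdZpow, List.sum_ofFn, ← zpow_add, ← zpow_add]
      have hexp : (∑ j : Fin k, (ns j + ns j.rev)) + n0 + -(2 - n0) = 0 := by
        rw [Finset.sum_add_distrib, sumRev]
        omega
      rw [hexp, zpow_zero]
  set φ := PresentedGroup.toGroup hlift with hφ
  have hφπ : ∀ w, φ (π w) = FreeGroup.lift fgen w := fun w => rfl
  have hleft : ψ.comp φ = MonoidHom.id (PresentedGroup rels) := by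
    ext i
    fin_cases i
    · show ψ (φ (π (FreeGroup.of 0))) = π (FreeGroup.of 0)
      rw [hφπ, hliftA, hA, hψa, ZMod.val_one, pow_one]
    · show ψ (φ (π (FreeGroup.of 1))) = π (FreeGroup.of 1)
      rw [hφπ, hliftT, hT, hψxa, ZMod.val_zero, pow_zero, mul_one]
  have hright : φ.comp ψ = MonoidHom.id (QuaternionGroup n) := by
    refine MonoidHom.ext ?_
    rintro (i | i)
    · show φ (ψ (QuaternionGroup.a i)) = QuaternionGroup.a i
      rw [hψa, map_pow, hφπ, hliftA, hA, QuaternionGroup.a_one_pow]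
      congr 1
      simp [ZMod.natCast_val, ZMod.cast_id]
    · show φ (ψ (QuaternionGroup.xa i)) = QuaternionGroup.xa i
      rw [hψxa, map_mul, map_pow, hφπ, hφπ, hliftA, hliftT, hA, hT,
        QuaternionGroup.a_one_pow, QuaternionGroup.xa_mul_a]
      congr 1
      simp [ZMod.natCast_val, ZMod.cast_id]
  exact ⟨MonoidHom.toMulEquiv φ ψ hleft hright⟩
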